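/- arXiv:0802.0679 — 4 statements merged into one kernel-verified Lean document; each statement's English description precedes it below -/
import Mathlib

section
/- Let X be a Hilbert space and let S_1, ..., S_p be pairwise commuting bounded operators on X with ||S_j|| ≤ 1 for each j. Let (λ_1, ..., λ_p) ∈ 𝕋^p be such that each operator Id − λ_j S_j is injective, and for each j let (λ_j^{(n)})_n be a sequence in 𝔻 tending to λ_j nontangentially as n → ∞. If y ∈ X is such that the sequence w_n := (Id − λ_1^{(n)} S_1)^{-1} ⋯ (Id − λ_p^{(n)} S_p)^{-1} y is uniformly bounded in norm, then y belongs to the range of the operator (Id − λ_1 S_1) ⋯ (Id − λ_p S_p). -/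
open Complex Filter Topology

noncomputable section

theorem statement_0 {X : Type*} [NormedAddCommGroup X] [InnerProductSpace ℂ X]
    [CompleteSpace X] (p : ℕ)
    (S : Fin p → X →L[ℂ] X)
    (hcomm : ∀ i j, S i ∘L S j = S j ∘L S i)
    (hnorm : ∀ j, ‖S j‖ ≤ 1)
    (lam : Fin p → ℂ) (hlam : ∀ j, ‖lam j‖ = 1)
    (hinj : ∀ j, Function.Injective ⇑((1 : X →L[ℂ] X) - lam j • S j))
    (lamn : ℕ → Fin p → ℂ) (hlamn : ∀ n j, ‖lamn n j‖ < 1)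
    (htend : ∀ j, Tendsto (fun n => lamn n j) atTop (𝓝 (lam j)))
    (hnontan : ∀ j, ∃ C : ℝ, ∀ n,
      ‖lam j - lamn n j‖ ≤ C * (1 - ‖lamn n j‖))
    (y : X) (w : ℕ → X)
    -- `w n` is the vector `(Id - λ₁⁽ⁿ⁾S₁)⁻¹ ⋯ (Id - λ_p⁽ⁿ⁾S_p)⁻¹ y` (each factor is
    -- invertible since `|λ_j⁽ⁿ⁾| ‖S_j‖ < 1`):
    (hw : ∀ n, (List.ofFn (fun j => (1 : X →L[ℂ] X) - lamn n j • S j)).prod (w n) = y)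
    (hbdd : ∃ C : ℝ, ∀ n, ‖w n‖ ≤ C) :
    y ∈ Set.range ⇑((List.ofFn (fun j => (1 : X →L[ℂ] X) - lam j • S j)).prod) := by
  classical
  obtain ⟨C, hC⟩ := hbdd
  have hC0 : 0 ≤ C := le_trans (norm_nonneg (w 0)) (hC 0)
  obtain ⟨U, hU⟩ := Ultrafilter.exists_le (atTop : Filter ℕ)
  set A : X →L[ℂ] X := (List.ofFn (fun j => (1 : X →L[ℂ] X) - lam j • S j)).prod with hAdef
  set An : ℕ → X →L[ℂ] X :=
    fun n => (List.ofFn (fun j => (1 : X →L[ℂ] X) - lamn n j • S j)).prod with hAndef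
  -- operator norm convergence of the products
  have hAn : Tendsto An atTop (𝓝 A) := by
    have key : ∀ l : List (Fin p),
        Tendsto (fun n => (l.map (fun j => (1 : X →L[ℂ] X) - lamn n j • S j)).prod) atTop
          (𝓝 ((l.map (fun j => (1 : X →L[ℂ] X) - lam j • S j)).prod)) := by
      intro l
      induction l with
      | nil => simpa using (tendsto_const_nhds : Tendsto (fun _ : ℕ => (1 : X →L[ℂ] X)) _ _)
      | cons a l ih =>
        simp only [List.map_cons, List.prod_cons]
        exact (tendsto_const_nhds.sub ((htend a).smul_const (S a))).mul ih
    simpa only [hAdef, hAndef, List.ofFn_eq_map] using key (List.finRange p)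
  -- A (w n) → y in norm
  have hAw : Tendsto (fun n => A (w n)) atTop (𝓝 y) := by
    rw [← tendsto_sub_nhds_zero_iff]
    have hbound : ∀ n, ‖A (w n) - y‖ ≤ ‖A - An n‖ * C := by
      intro n
      have : A (w n) - y = (A - An n) (w n) := by
        rw [← hw n]; simp [hAndef]
      rw [this]
      calc ‖(A - An n) (w n)‖ ≤ ‖A - An n‖ * ‖w n‖ := (A - An n).le_opNorm (w n)
        _ ≤ ‖A - An n‖ * C := by
            exact mul_le_mul_of_nonneg_left (hC n) (norm_nonneg _)
    have hAnorm : Tendsto (fun n => ‖A - An n‖ * C) atTop (𝓝 0) := by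
      have h1 : Tendsto (fun n => ‖An n - A‖) atTop (𝓝 0) :=
        (tendsto_iff_norm_sub_tendsto_zero.mp hAn)
      have h2 : Tendsto (fun n => ‖A - An n‖) atTop (𝓝 0) := by
        simpa [norm_sub_rev] using h1
      simpa using h2.mul_const C
    exact squeeze_zero_norm hbound hAnorm
  -- weak cluster limits along the ultrafilter
  have hlim : ∀ v : X, ∃ z : ℂ, Tendsto (fun n => (inner ℂ (w n) v : ℂ)) U (𝓝 z) := by
    intro v
    have hmem : ∀ n, (inner ℂ (w n) v : ℂ) ∈ Metric.closedBall (0 : ℂ) (C * ‖v‖) := by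
      intro n
      simp only [Metric.mem_closedBall, dist_zero_right]
      calc ‖(inner ℂ (w n) v : ℂ)‖ ≤ ‖w n‖ * ‖v‖ := norm_inner_le_norm _ _
        _ ≤ C * ‖v‖ := mul_le_mul_of_nonneg_right (hC n) (norm_nonneg _)
    have hcomp : IsCompact (Metric.closedBall (0 : ℂ) (C * ‖v‖)) := isCompact_closedBall _ _
    obtain ⟨z, _, hz⟩ := hcomp.ultrafilter_le_nhds (U.map fun n => (inner ℂ (w n) v : ℂ))
      (Filter.le_principal_iff.mpr (Filter.mem_map.mpr (by filter_upwards using hmem)))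
    exact ⟨z, hz⟩
  choose L hL using hlim
  -- linearity of L
  have hadd : ∀ v v' : X, L (v + v') = L v + L v' := by
    intro v v'
    refine tendsto_nhds_unique (hL (v + v')) ?_
    have := (hL v).add (hL v')
    simpa [inner_add_right] using this
  have hsmul : ∀ (c : ℂ) (v : X), L (c • v) = c * L v := by
    intro c v
    refine tendsto_nhds_unique (hL (c • v)) ?_
    have := (hL v).const_mul c
    simpa [inner_smul_right] using this
  have hLbound : ∀ v : X, ‖L v‖ ≤ C * ‖v‖ := by
    intro v
    refine le_of_tendsto (hL v).norm ?_
    filter_upwards with n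
    calc ‖(inner ℂ (w n) v : ℂ)‖ ≤ ‖w n‖ * ‖v‖ := norm_inner_le_norm _ _
      _ ≤ C * ‖v‖ := mul_le_mul_of_nonneg_right (hC n) (norm_nonneg _)
  let F : X →L[ℂ] ℂ :=
    LinearMap.mkContinuous
      { toFun := L
        map_add' := hadd
        map_smul' := by intro c v; simpa using hsmul c v } C hLbound
  set x : X := (InnerProductSpace.toDual ℂ X).symm F with hxdef
  have hx : ∀ v : X, (inner ℂ x v : ℂ) = L v := by
    intro v
    rw [hxdef, InnerProductSpace.toDual_symm_apply]
    rfl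
  refine ⟨x, ?_⟩
  -- show A x = y
  apply ext_inner_right ℂ
  intro v
  have hadj : ∀ n : ℕ, (inner ℂ (w n) (ContinuousLinearMap.adjoint A v) : ℂ)
      = inner ℂ (A (w n)) v := by
    intro n
    exact ContinuousLinearMap.adjoint_inner_right A (w n) v
  have h2 : Tendsto (fun n => (inner ℂ (w n) (ContinuousLinearMap.adjoint A v) : ℂ)) U
      (𝓝 (inner ℂ y v : ℂ)) := by
    have : Tendsto (fun n => (inner ℂ (A (w n)) v : ℂ)) atTop (𝓝 (inner ℂ y v)) :=
      hAw.inner tendsto_const_nhds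
    simpa [hadj] using this.mono_left hU
  have h3 : L (ContinuousLinearMap.adjoint A v) = inner ℂ y v :=
    tendsto_nhds_unique (hL _) h2
  calc (inner ℂ (A x) v : ℂ) = inner ℂ x (ContinuousLinearMap.adjoint A v) :=
        (ContinuousLinearMap.adjoint_inner_right A x v).symm
    _ = L (ContinuousLinearMap.adjoint A v) := hx _
    _ = inner ℂ y v := h3
end
end

section
/- Let N be a non-negative integer, let R₀ > 1, and let b be in the closed unit ball of H^∞(𝔻) admitting an analytic extension to a neighborhood of the interval [0, R₀] which has 2N+1 continuous derivatives on [0, R₀], satisfies b(z) · conj(b(1/conj(z))) = 1 where defined, and has no zeros in the interval (1/R₀, 1). For r ∈ (1/R₀, 1) define h_{r,N}^b(z) = N! z^N − b(z) ∑_{j=0}^N binom(N,j) conj(b^{(j)}(r)) (N−j)! z^{N−j} (1 − r z)^j. Then h_{r,N}^b and its first N derivatives all vanish at the point z = 1/r. -/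
open Complex Filter Set Metric Topology

noncomputable section

/-- The open unit disc `𝔻 ⊆ ℂ`. -/
def openUnitDisc : Set ℂ := Metric.ball 0 1

/-- If `b` is complex differentiable at `conj w`, then `z ↦ conj (b (conj z))` is
complex differentiable at `w`, with derivative `conj b'`. -/
lemma hasDerivAt_conj_conj {b : ℂ → ℂ} {b' w : ℂ}
    (h : HasDerivAt b b' ((starRingEnd ℂ) w)) :
    HasDerivAt (fun z => (starRingEnd ℂ) (b ((starRingEnd ℂ) z))) ((starRingEnd ℂ) b') w := by
  rw [hasDerivAt_iff_tendsto_slope] at h ⊢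
  have hconj : Tendsto (fun z : ℂ => (starRingEnd ℂ) z) (𝓝[≠] w) (𝓝[≠] ((starRingEnd ℂ) w)) := by
    rw [tendsto_nhdsWithin_iff]
    refine ⟨(Complex.continuous_conj.tendsto w).mono_left nhdsWithin_le_nhds, ?_⟩
    filter_upwards [self_mem_nhdsWithin] with z hz
    simp only [Set.mem_compl_iff, Set.mem_singleton_iff] at hz ⊢
    intro hc
    apply hz
    have := congrArg (starRingEnd ℂ) hc
    simpa using this
  have key := (Complex.continuous_conj.tendsto b').comp (h.comp hconj)
  refine key.congr fun z => ?_
  simp [Function.comp, slope_def_field, map_div₀]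

/-- Finite Taylor-type expansion via iterated `dslope`. -/
lemma taylor_dslope_expand (f : ℂ → ℂ) (c : ℂ) :
    ∀ (n : ℕ) (z : ℂ), f z = (∑ i ∈ Finset.range n,
        (z - c) ^ i * ((Function.swap dslope c)^[i] f) c)
      + (z - c) ^ n * ((Function.swap dslope c)^[n] f) z := by
  intro n
  induction n with
  | zero => intro z; simp
  | succ n ih =>
    intro z
    have key : ((Function.swap dslope c)^[n] f) z
        = ((Function.swap dslope c)^[n] f) c
          + (z - c) * ((Function.swap dslope c)^[n + 1] f) z := by
      have h := sub_smul_dslope ((Function.swap dslope c)^[n] f) c z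
      rw [smul_eq_mul] at h
      rw [Function.iterate_succ_apply']
      show _ = _ + (z - c) * dslope ((Function.swap dslope c)^[n] f) c z
      linear_combination -h
    rw [Finset.sum_range_succ, ih z, key]
    ring

/-- If `g` is analytic at `c` and `j < m`, the `j`-th derivative of
`(z - c) ^ m * g z` vanishes at `c`. -/
lemma iteratedDeriv_pow_mul_eq_zero :
    ∀ (j : ℕ) {m : ℕ} {g : ℂ → ℂ} {c : ℂ}, AnalyticAt ℂ g c → j < m →
      iteratedDeriv j (fun z => (z - c) ^ m * g z) c = 0 := by
  intro j
  induction j with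
  | zero =>
    intro m g c _ hm
    simp [iteratedDeriv_zero, zero_pow (by omega : m ≠ 0)]
  | succ j ih =>
    intro m g c hg hm
    obtain ⟨k, rfl⟩ : ∃ k, m = k + 1 := ⟨m - 1, by omega⟩
    rw [iteratedDeriv_succ']
    have hderiv : AnalyticAt ℂ (deriv g) c := by
      have hs : AnalyticOnNhd ℂ g {x | AnalyticAt ℂ g x} := fun x hx => hx
      exact hs.deriv c hg
    have heq : deriv (fun z => (z - c) ^ (k + 1) * g z) =ᶠ[𝓝 c]
        (fun z => (z - c) ^ k * (((k : ℂ) + 1) * g z + (z - c) * deriv g z)) := by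
      filter_upwards [(isOpen_analyticAt ℂ g).eventually_mem hg] with z hz
      have h1 : HasDerivAt (fun z : ℂ => (z - c) ^ (k + 1))
          (((k : ℂ) + 1) * (z - c) ^ (k + 1 - 1) * 1) z := by
        exact_mod_cast ((hasDerivAt_id z).sub_const c).pow (k + 1)
      have h2 : HasDerivAt g (deriv g z) z := hz.differentiableAt.hasDerivAt
      rw [show (fun z => (z - c) ^ (k + 1) * g z) = (fun z => (z - c) ^ (k + 1)) * g from rfl,
        (h1.mul h2).deriv]
      simp only [Nat.add_sub_cancel]
      ring
    rw [heq.iteratedDeriv_eq j]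
    refine ih ?_ (by omega)
    exact ((analyticAt_const.mul hg).add
      ((analyticAt_id.sub analyticAt_const).mul hderiv))

theorem statement_12 (N : ℕ) (R0 : ℝ) (hR0 : 1 < R0)
    (b : ℂ → ℂ) (U : Set ℂ) (hU : IsOpen U)
    (hUIcc : (fun x : ℝ => (x : ℂ)) '' Set.Icc (0 : ℝ) R0 ⊆ U)
    (hb_diff : DifferentiableOn ℂ b (openUnitDisc ∪ U))
    (hb_bound : ∀ z ∈ openUnitDisc, ‖b z‖ ≤ 1)
    -- the functional equation `b z * conj (b (1 / conj z)) = 1` where defined: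
    (hfe : ∀ z ∈ U, z ≠ 0 → ((starRingEnd ℂ) z)⁻¹ ∈ U →
      b z * (starRingEnd ℂ) (b (((starRingEnd ℂ) z)⁻¹)) = 1)
    -- `b` has no zeros in the real interval `(1/R₀, 1)`:
    (hnz : ∀ x : ℝ, x ∈ Set.Ioo (1 / R0) 1 → b (x : ℂ) ≠ 0)
    (r : ℝ) (hr : r ∈ Set.Ioo (1 / R0) 1) :
    -- `h_{r,N}^b` and its first `N` derivatives vanish at `z = 1/r`:
    ∀ j ≤ N, iteratedDeriv j
      (fun z : ℂ => (Nat.factorial N : ℂ) * z ^ N - b z * ∑ i ∈ Finset.range (N + 1),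
        (N.choose i : ℂ) * (starRingEnd ℂ) (iteratedDeriv i b (r : ℂ)) * (Nat.factorial (N - i) : ℂ) *
          z ^ (N - i) * (1 - (r : ℂ) * z) ^ i)
      ((r⁻¹ : ℝ) : ℂ) = 0 := by
  intro j hj
  have hR0pos : (0:ℝ) < R0 := lt_trans one_pos hR0
  have hrpos : 0 < r := (div_pos one_pos hR0pos).trans hr.1
  have hrne : r ≠ 0 := ne_of_gt hrpos
  have hRr : 1 < r * R0 := (div_lt_iff₀ hR0pos).mp hr.1
  have hrinv_lt : r⁻¹ < R0 := by
    nlinarith [mul_pos (inv_pos.mpr hrpos) (sub_pos.mpr hRr),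
      show r * r⁻¹ * R0 = R0 from by rw [mul_inv_cancel₀ hrne, one_mul]]
  set c : ℂ := ((r⁻¹ : ℝ) : ℂ) with hcdef
  have hcval : c = (r : ℂ)⁻¹ := by rw [hcdef, Complex.ofReal_inv]
  have hrC : (r : ℂ) ≠ 0 := Complex.ofReal_ne_zero.mpr hrne
  have hc0 : c ≠ 0 := by rw [hcval]; exact inv_ne_zero hrC
  have hcinv : c⁻¹ = (r : ℂ) := by rw [hcval, inv_inv]
  have hconjc : (starRingEnd ℂ) c = c := Complex.conj_ofReal _
  have hconjr : (starRingEnd ℂ) (r : ℂ) = (r : ℂ) := Complex.conj_ofReal _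
  have hcU : c ∈ U := hUIcc ⟨r⁻¹, ⟨(inv_nonneg.mpr hrpos.le), hrinv_lt.le⟩, rfl⟩
  have hrU : (r : ℂ) ∈ U := hUIcc ⟨r, ⟨hrpos.le, hr.2.le.trans hR0.le⟩, rfl⟩
  have hbU : AnalyticOnNhd ℂ b U := (hb_diff.mono subset_union_right).analyticOnNhd hU
  set G : ℂ → ℂ := fun w => (starRingEnd ℂ) (b ((starRingEnd ℂ) w)) with hGdef
  set U' : Set ℂ := (fun z => (starRingEnd ℂ) z) ⁻¹' U with hU'def
  have hU'open : IsOpen U' := hU.preimage Complex.continuous_conj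
  have hrU' : (r : ℂ) ∈ U' := by
    simp only [hU'def, Set.mem_preimage, hconjr]; exact hrU
  have hbIter : ∀ k, AnalyticOnNhd ℂ (iteratedDeriv k b) U := by
    intro k
    induction k with
    | zero => simpa [iteratedDeriv_zero] using hbU
    | succ k ihk => rw [iteratedDeriv_succ]; exact ihk.deriv
  have hGdiff : DifferentiableOn ℂ G U' := by
    intro w hw
    have hb' := ((hbU _ hw).differentiableAt).hasDerivAt
    exact ((hasDerivAt_conj_conj hb').differentiableAt).differentiableWithinAt
  have hGan : AnalyticOnNhd ℂ G U' := hGdiff.analyticOnNhd hU'open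
  have hGiter : ∀ k, ∀ w ∈ U', iteratedDeriv k G w
      = (starRingEnd ℂ) (iteratedDeriv k b ((starRingEnd ℂ) w)) := by
    intro k
    induction k with
    | zero => intro w hw; simp [iteratedDeriv_zero, hGdef]
    | succ k ihk =>
      intro w hw
      have heq : iteratedDeriv k G =ᶠ[𝓝 w]
          (fun w' => (starRingEnd ℂ) (iteratedDeriv k b ((starRingEnd ℂ) w'))) :=
        eventually_of_mem (hU'open.mem_nhds hw) ihk
      rw [iteratedDeriv_succ, heq.deriv_eq]
      have hb' : HasDerivAt (iteratedDeriv k b)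
          (iteratedDeriv (k + 1) b ((starRingEnd ℂ) w)) ((starRingEnd ℂ) w) := by
        have hd := ((hbIter k) _ hw).differentiableAt.hasDerivAt
        rw [iteratedDeriv_succ]
        exact hd
      exact (hasDerivAt_conj_conj hb').deriv
  have hGr : ∀ k, iteratedDeriv k G (r : ℂ)
      = (starRingEnd ℂ) (iteratedDeriv k b (r : ℂ)) := by
    intro k
    have := hGiter k (r : ℂ) hrU'
    rwa [hconjr] at this
  obtain ⟨p, hp⟩ := hGan (r : ℂ) hrU'
  have hDps : HasFPowerSeriesAt ((Function.swap dslope (r : ℂ))^[N + 1] G)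
      (FormalMultilinearSeries.fslope^[N + 1] p) (r : ℂ) :=
    hp.has_fpower_series_iterate_dslope_fslope (N + 1)
  have hDan : AnalyticAt ℂ ((Function.swap dslope (r : ℂ))^[N + 1] G) (r : ℂ) := ⟨_, hDps⟩
  have hcoeff : ∀ i, ((Function.swap dslope (r : ℂ))^[i] G) (r : ℂ) = p.coeff i := by
    intro i
    have h1 := (hp.has_fpower_series_iterate_dslope_fslope i).coeff_zero 1
    have h3 : (FormalMultilinearSeries.fslope^[i] p).coeff 0
        = (FormalMultilinearSeries.fslope^[i] p) 0 1 := rfl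
    rw [← h1, ← h3, FormalMultilinearSeries.coeff_iterate_fslope, Nat.zero_add]
  have hq_fact : ∀ i, (Nat.factorial i : ℂ) * ((Function.swap dslope (r : ℂ))^[i] G) (r : ℂ)
      = (starRingEnd ℂ) (iteratedDeriv i b (r : ℂ)) := by
    intro i
    obtain ⟨rad, hball⟩ := id hp
    have h4 := hball.factorial_smul (1 : ℂ) i
    have h5 : (p i fun _ => (1 : ℂ)) = p.coeff i := by
      rw [FormalMultilinearSeries.apply_eq_pow_smul_coeff, one_pow, one_smul]
    calc (Nat.factorial i : ℂ) * ((Function.swap dslope (r : ℂ))^[i] G) (r : ℂ)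
        = (Nat.factorial i : ℂ) * p.coeff i := by rw [hcoeff]
      _ = (Nat.factorial i) • p.coeff i := (nsmul_eq_mul _ _).symm
      _ = iteratedDeriv i G (r : ℂ) := by
          rw [← h5, h4, ← iteratedDeriv_eq_iteratedFDeriv]
      _ = (starRingEnd ℂ) (iteratedDeriv i b (r : ℂ)) := hGr i
  -- the open set where the functional equation holds
  set S : Set ℂ := U ∩ ({z : ℂ | z ≠ 0} ∩ ((fun z => ((starRingEnd ℂ) z)⁻¹) ⁻¹' U)) with hSdef
  have hSopen : IsOpen S := by
    apply hU.inter
    apply ContinuousOn.isOpen_inter_preimage ?_ ?_ hU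
    · refine ContinuousOn.inv₀ Complex.continuous_conj.continuousOn ?_
      intro z hz
      simpa using hz
    · exact isOpen_ne
  have hcS : c ∈ S := by
    refine ⟨hcU, hc0, ?_⟩
    simp only [Set.mem_preimage, hconjc, hcinv]
    exact hrU
  -- eventual factorization of the function in question
  have hfac : (fun z : ℂ => (Nat.factorial N : ℂ) * z ^ N - b z * ∑ i ∈ Finset.range (N + 1),
        (N.choose i : ℂ) * (starRingEnd ℂ) (iteratedDeriv i b (r : ℂ)) * (Nat.factorial (N - i) : ℂ) *
          z ^ (N - i) * (1 - (r : ℂ) * z) ^ i)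
      =ᶠ[𝓝 c] (fun z => (z - c) ^ (N + 1) *
        ((-(r : ℂ)) ^ (N + 1) * ((Nat.factorial N : ℂ) * b z *
          ((Function.swap dslope (r : ℂ))^[N + 1] G) z⁻¹ * z⁻¹))) := by
    filter_upwards [hSopen.mem_nhds hcS] with z hz
    obtain ⟨hzU, hz0, hzinvU⟩ := hz
    have hz0 : z ≠ 0 := hz0
    have hFE : b z * G z⁻¹ = 1 := by
      have h := hfe z hzU hz0 hzinvU
      simpa [hGdef, map_inv₀] using h
    have hexp := taylor_dslope_expand G (r : ℂ) (N + 1) z⁻¹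
    have hzinv : z⁻¹ - (r : ℂ) = (1 - (r : ℂ) * z) * z⁻¹ := by
      rw [sub_mul, one_mul, mul_assoc, mul_inv_cancel₀ hz0, mul_one]
    have hone' : (1 : ℂ) - (r : ℂ) * z = -(r : ℂ) * (z - c) := by
      rw [hcval]
      have hmul : (r : ℂ) * (r : ℂ)⁻¹ = 1 := mul_inv_cancel₀ hrC
      linear_combination -hmul
    have hzpow : ∀ i ≤ N, z ^ N * (z⁻¹) ^ i = z ^ (N - i) := by
      intro i hi
      rw [← pow_sub_mul_pow z hi, mul_assoc, ← mul_pow, mul_inv_cancel₀ hz0, one_pow, mul_one]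
    have hterm : ∀ i ∈ Finset.range (N + 1),
        (Nat.factorial N : ℂ) * z ^ N *
          ((z⁻¹ - (r : ℂ)) ^ i * ((Function.swap dslope (r : ℂ))^[i] G) (r : ℂ))
        = (N.choose i : ℂ) * (starRingEnd ℂ) (iteratedDeriv i b (r : ℂ)) *
            (Nat.factorial (N - i) : ℂ) * z ^ (N - i) * (1 - (r : ℂ) * z) ^ i := by
      intro i hi
      have hi' : i ≤ N := Nat.lt_succ_iff.mp (Finset.mem_range.mp hi)
      have hfact : (N.choose i : ℂ) * (Nat.factorial (N - i) : ℂ) * (Nat.factorial i : ℂ)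
          = (Nat.factorial N : ℂ) := by
        have := Nat.choose_mul_factorial_mul_factorial hi'
        push_cast [← this]
        ring
      rw [hzinv, ← hq_fact i, ← hzpow i hi', ← hfact, mul_pow]
      ring
    have hrem : z ^ N * (z⁻¹ - (r : ℂ)) ^ (N + 1)
        = (-(r : ℂ)) ^ (N + 1) * (z - c) ^ (N + 1) * z⁻¹ := by
      have hzz : z ^ N * (z⁻¹) ^ (N + 1) = z⁻¹ := by
        rw [pow_succ, ← mul_assoc, ← mul_pow, mul_inv_cancel₀ hz0, one_pow, one_mul]
      rw [hzinv, hone', mul_pow, mul_pow]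
      linear_combination ((-(r : ℂ)) ^ (N + 1) * (z - c) ^ (N + 1)) * hzz
    have key1 : (Nat.factorial N : ℂ) * z ^ N
        = b z * ((Nat.factorial N : ℂ) * z ^ N * G z⁻¹) := by
      rw [show b z * ((Nat.factorial N : ℂ) * z ^ N * G z⁻¹)
        = ((Nat.factorial N : ℂ) * z ^ N) * (b z * G z⁻¹) from by ring, hFE, mul_one]
    have key2 : (Nat.factorial N : ℂ) * z ^ N *
        ((∑ i ∈ Finset.range (N + 1),
            (z⁻¹ - (r : ℂ)) ^ i * ((Function.swap dslope (r : ℂ))^[i] G) (r : ℂ))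
          + (z⁻¹ - (r : ℂ)) ^ (N + 1) * ((Function.swap dslope (r : ℂ))^[N + 1] G) z⁻¹)
        = (∑ i ∈ Finset.range (N + 1),
            (N.choose i : ℂ) * (starRingEnd ℂ) (iteratedDeriv i b (r : ℂ)) *
              (Nat.factorial (N - i) : ℂ) * z ^ (N - i) * (1 - (r : ℂ) * z) ^ i)
          + (-(r : ℂ)) ^ (N + 1) * (z - c) ^ (N + 1) *
              ((Nat.factorial N : ℂ) * ((Function.swap dslope (r : ℂ))^[N + 1] G) z⁻¹ * z⁻¹) := by
      rw [mul_add]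
      congr 1
      · rw [Finset.mul_sum]
        exact Finset.sum_congr rfl hterm
      · linear_combination ((Nat.factorial N : ℂ) *
          ((Function.swap dslope (r : ℂ))^[N + 1] G) z⁻¹) * hrem
    rw [key1, hexp, key2]
    ring
  rw [Filter.EventuallyEq.iteratedDeriv_eq j hfac]
  refine iteratedDeriv_pow_mul_eq_zero j ?_ (by omega)
  have hDinv : AnalyticAt ℂ (fun z : ℂ => ((Function.swap dslope (r : ℂ))^[N + 1] G) z⁻¹) c := by
    have hDc : AnalyticAt ℂ ((Function.swap dslope (r : ℂ))^[N + 1] G) c⁻¹ := by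
      rw [hcinv]; exact hDan
    have h := hDc.comp (analyticAt_inv hc0)
    exact h
  exact analyticAt_const.mul
    (((analyticAt_const.mul (hbU c hcU)).mul hDinv).mul (analyticAt_inv hc0))
end
end

section
/- Let b be in the closed unit ball of H^∞(𝔻), let ζ_0 ∈ 𝕋 and let β ∈ ℂ with |β| ≤ 1. Suppose b(rζ_0) → β as r → 1⁻ and that the function z ↦ (1 − conj(β) b(z))/(1 − conj(ζ_0) z) belongs to H²(𝔻). Then |β| = 1. -/
open Complex Filter Set Metric Topology

noncomputable section

theorem statement_13 (b : ℂ → ℂ)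
    (hb_diff : DifferentiableOn ℂ b openUnitDisc)
    (hb_bound : ∀ z ∈ openUnitDisc, ‖b z‖ ≤ 1)
    (ζ0 : ℂ) (hζ0 : ‖ζ0‖ = 1)
    (β : ℂ) (hβ : ‖β‖ ≤ 1)
    (hlim : Tendsto (fun r : ℝ => b ((r : ℂ) * ζ0)) (𝓝[Set.Ioo (0:ℝ) 1] 1) (𝓝 β))
    -- the function `z ↦ (1 - conj β * b z)/(1 - conj ζ₀ * z)` belongs to `H²(𝔻)`, i.e.
    -- its integral means over circles of radius `r < 1` are uniformly bounded:
    (hH2 : ∃ C : ℝ, ∀ r ∈ Set.Ioo (0:ℝ) 1,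
      (∫ t in (0:ℝ)..(2 * Real.pi),
        ‖(1 - (starRingEnd ℂ) β * b ((r : ℂ) * Complex.exp (Complex.I * (t : ℂ)))) /
          (1 - (starRingEnd ℂ) ζ0 * ((r : ℂ) * Complex.exp (Complex.I * (t : ℂ))))‖ ^ 2) ≤ C) :
    ‖β‖ = 1 := by
  by_contra hne
  have hβlt : ‖β‖ < 1 := lt_of_le_of_ne hβ hne
  obtain ⟨C, hC⟩ := hH2
  have hπ := Real.pi_gt_three
  set ε : ℝ := 1 - ‖β‖ with hεdef
  have hεpos : 0 < ε := by simp only [hεdef]; linarith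
  set δ : ℝ := min (1/2) (ε^2 / (18 * (|C| + 1))) with hδdef
  have hδpos : 0 < δ := lt_min (by norm_num) (by positivity)
  have hδhalf : δ ≤ 1/2 := min_le_left _ _
  have hδC : δ ≤ ε^2 / (18 * (|C| + 1)) := min_le_right _ _
  set r : ℝ := 1 - δ with hrdef
  have hrI : r ∈ Set.Ioo (0:ℝ) 1 := ⟨by simp only [hrdef]; linarith, by simp only [hrdef]; linarith⟩
  -- choose `t0 ∈ [0, 2π)` with `exp(t0 * I) = ζ0`
  obtain ⟨θ, hθ⟩ := (Complex.norm_eq_one_iff ζ0).mp hζ0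
  set t0 : ℝ := θ - ⌊θ / (2 * Real.pi)⌋ * (2 * Real.pi) with ht0def
  have h2π : (0:ℝ) < 2 * Real.pi := by linarith
  have ht0nonneg : 0 ≤ t0 := Int.sub_floor_div_mul_nonneg θ h2π
  have ht0lt : t0 < 2 * Real.pi := Int.sub_floor_div_mul_lt θ h2π
  have ht0 : Complex.exp ((t0 : ℂ) * Complex.I) = ζ0 := by
    have h1 : ((t0 : ℝ) : ℂ) * Complex.I = (θ : ℂ) * Complex.I
        - ((⌊θ / (2 * Real.pi)⌋ : ℤ) : ℂ) * (2 * (Real.pi : ℂ) * Complex.I) := by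
      rw [ht0def]; push_cast; ring
    rw [h1, Complex.exp_sub, hθ, Complex.exp_int_mul_two_pi_mul_I, div_one]
  -- the arc
  set a : ℝ := if t0 ≤ Real.pi then t0 else t0 - δ with hadef
  have ha0 : 0 ≤ a := by
    rw [hadef]; split_ifs with h
    · exact ht0nonneg
    · push_neg at h; linarith
  have haδ : a + δ ≤ 2 * Real.pi := by
    rw [hadef]; split_ifs with h
    · linarith
    · linarith
  have hdist : ∀ t ∈ Set.Icc a (a + δ), |t - t0| ≤ δ := by
    intro t ht
    rw [hadef] at ht
    rw [abs_le]
    split_ifs at ht with h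
    · exact ⟨by linarith [ht.1], by linarith [ht.2]⟩
    · exact ⟨by linarith [ht.1], by linarith [ht.2]⟩
  -- basic facts about the circle points
  have habsz : ∀ t : ℝ, ‖(r : ℂ) * Complex.exp (Complex.I * (t : ℂ))‖ = r := by
    intro t
    rw [norm_mul, Complex.norm_real, Real.norm_eq_abs, mul_comm Complex.I, Complex.norm_exp_ofReal_mul_I,
      abs_of_pos hrI.1, mul_one]
  have hzmem : ∀ t : ℝ, (r : ℂ) * Complex.exp (Complex.I * (t : ℂ)) ∈ openUnitDisc := by
    intro t
    simp only [openUnitDisc, Metric.mem_ball, dist_zero_right]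
    rw [habsz]; exact hrI.2
  have hdenne : ∀ t : ℝ,
      (1 - (starRingEnd ℂ) ζ0 * ((r : ℂ) * Complex.exp (Complex.I * (t : ℂ)))) ≠ 0 := by
    intro t hzero
    have h1 : (starRingEnd ℂ) ζ0 * ((r : ℂ) * Complex.exp (Complex.I * (t : ℂ))) = 1 := by
      linear_combination -hzero
    have h2 : ‖(starRingEnd ℂ) ζ0 * ((r : ℂ) * Complex.exp (Complex.I * (t : ℂ)))‖ = r := by
      rw [norm_mul, Complex.norm_conj, hζ0, one_mul, habsz]
    rw [h1, norm_one] at h2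
    exact absurd h2.symm (ne_of_lt hrI.2)
  -- the integrand as a function
  set F : ℝ → ℝ := fun t =>
    ‖(1 - (starRingEnd ℂ) β * b ((r : ℂ) * Complex.exp (Complex.I * (t : ℂ)))) /
      (1 - (starRingEnd ℂ) ζ0 * ((r : ℂ) * Complex.exp (Complex.I * (t : ℂ))))‖ ^ 2 with hFdef
  have hzcont : Continuous fun t : ℝ => (r : ℂ) * Complex.exp (Complex.I * (t : ℂ)) :=
    continuous_const.mul (Complex.continuous_exp.comp (continuous_const.mul
      Complex.continuous_ofReal))
  have hFcont : Continuous F := by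
    apply Continuous.pow
    apply continuous_norm.comp
    apply Continuous.div
    · exact continuous_const.sub (continuous_const.mul
        ((hb_diff.continuousOn.comp_continuous hzcont hzmem)))
    · exact continuous_const.sub (continuous_const.mul hzcont)
    · exact hdenne
  have hFnonneg : ∀ t : ℝ, 0 ≤ F t := fun t => by positivity
  -- pointwise lower bound on the arc
  have hlow : ∀ t ∈ Set.Icc a (a + δ), (ε / (3 * δ))^2 ≤ F t := by
    intro t ht
    have hdt := hdist t ht
    set z : ℂ := (r : ℂ) * Complex.exp (Complex.I * (t : ℂ)) with hzdef
    -- numerator lower bound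
    have hnum : ε ≤ ‖1 - (starRingEnd ℂ) β * b z‖ := by
      have h1 : ‖(starRingEnd ℂ) β * b z‖ ≤ ‖β‖ := by
        rw [norm_mul, Complex.norm_conj]
        calc ‖β‖ * ‖b z‖ ≤ ‖β‖ * 1 :=
          mul_le_mul_of_nonneg_left (hb_bound z (hzmem t)) (norm_nonneg β)
        _ = ‖β‖ := mul_one _
      have h2 := norm_sub_norm_le (1 : ℂ) ((starRingEnd ℂ) β * b z)
      simp only [norm_one] at h2
      simp only [hεdef]
      linarith
    -- denominator relations
    have hconjζ : (starRingEnd ℂ) ζ0 = Complex.exp (-(t0 : ℂ) * Complex.I) := by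
      rw [← ht0, ← Complex.exp_conj]
      congr 1
      simp [Complex.conj_ofReal]
    have hconj : (starRingEnd ℂ) ζ0 * z = (r : ℂ) * Complex.exp (Complex.I * ((t : ℂ) - (t0 : ℂ))) := by
      calc (starRingEnd ℂ) ζ0 * z
          = (r : ℂ) * (Complex.exp (-(t0 : ℂ) * Complex.I) * Complex.exp (Complex.I * (t : ℂ))) := by
            rw [hconjζ, hzdef]; ring
        _ = (r : ℂ) * Complex.exp (Complex.I * ((t : ℂ) - (t0 : ℂ))) := by
            rw [← Complex.exp_add,
              show -(t0 : ℂ) * Complex.I + Complex.I * (t : ℂ)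
                = Complex.I * ((t : ℂ) - (t0 : ℂ)) by ring]
    have habsw : ‖(starRingEnd ℂ) ζ0 * z‖ = r := by
      rw [norm_mul, Complex.norm_conj, hζ0, one_mul, hzdef]
      exact habsz t
    have hden_le : ‖1 - (starRingEnd ℂ) ζ0 * z‖ ≤ 3 * δ := by
      have hsplit : (1 : ℂ) - (starRingEnd ℂ) ζ0 * z
          = ((1 : ℂ) - (r : ℂ)) + (r : ℂ) * (1 - Complex.exp (Complex.I * ((t : ℂ) - (t0 : ℂ)))) := by
        rw [hconj]; ring
      have hexp : ‖1 - Complex.exp (Complex.I * ((t : ℂ) - (t0 : ℂ)))‖ ≤ 2 * δ := by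
        have habs_arg : ‖Complex.I * ((t : ℂ) - (t0 : ℂ))‖ = |t - t0| := by
          rw [norm_mul, Complex.norm_I, one_mul]
          rw [show ((t : ℂ) - (t0 : ℂ)) = ((t - t0 : ℝ) : ℂ) by push_cast; ring]
          rw [Complex.norm_real, Real.norm_eq_abs]
        have h1 : ‖Complex.I * ((t : ℂ) - (t0 : ℂ))‖ ≤ 1 := by
          rw [habs_arg]; linarith
        have h2 := Complex.norm_exp_sub_one_le h1
        rw [habs_arg] at h2
        rw [show (1 : ℂ) - Complex.exp (Complex.I * ((t : ℂ) - (t0 : ℂ)))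
            = -(Complex.exp (Complex.I * ((t : ℂ) - (t0 : ℂ))) - 1) by ring,
          norm_neg]
        linarith
      rw [hsplit]
      calc ‖((1 : ℂ) - (r : ℂ)) + (r : ℂ) * (1 - Complex.exp (Complex.I * ((t : ℂ) - (t0 : ℂ))))‖
          ≤ ‖(1 : ℂ) - (r : ℂ)‖
            + ‖(r : ℂ) * (1 - Complex.exp (Complex.I * ((t : ℂ) - (t0 : ℂ))))‖ :=
            norm_add_le _ _
        _ ≤ δ + 1 * (2 * δ) := by
            apply add_le_add
            · rw [show (1 : ℂ) - (r : ℂ) = ((1 - r : ℝ) : ℂ) by push_cast; ring,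
                Complex.norm_real, Real.norm_eq_abs, hrdef]
              rw [show (1 : ℝ) - (1 - δ) = δ by ring, _root_.abs_of_nonneg hδpos.le]
            · rw [norm_mul, Complex.norm_real, Real.norm_eq_abs, abs_of_pos hrI.1]
              exact mul_le_mul (by simp only [hrdef]; linarith) hexp (norm_nonneg _)
                (by norm_num)
        _ = 3 * δ := by ring
    have hden_pos : 0 < ‖1 - (starRingEnd ℂ) ζ0 * z‖ := by
      rw [hzdef]
      exact norm_pos_iff.mpr (hdenne t)
    -- quotient bound
    have hq : ε / (3 * δ) ≤ ‖(1 - (starRingEnd ℂ) β * b z) /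
        (1 - (starRingEnd ℂ) ζ0 * z)‖ := by
      rw [norm_div]
      exact div_le_div₀ (norm_nonneg _) hnum hden_pos hden_le
    have hq0 : 0 ≤ ε / (3 * δ) := by positivity
    simp only [hFdef, ← hzdef]
    exact pow_le_pow_left₀ hq0 hq 2
  -- integrability
  have hFint : IntervalIntegrable F MeasureTheory.volume 0 (2 * Real.pi) :=
    hFcont.intervalIntegrable _ _
  have hFint2 : IntervalIntegrable F MeasureTheory.volume a (a + δ) :=
    hFcont.intervalIntegrable _ _
  -- lower bound on the small integral
  have hδne : δ ≠ 0 := ne_of_gt hδpos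
  have hstep1 : ε^2 / (9 * δ) ≤ ∫ t in a..(a + δ), F t := by
    have h1 : (∫ t in a..(a + δ), (ε / (3 * δ))^2) ≤ ∫ t in a..(a + δ), F t :=
      intervalIntegral.integral_mono_on (by linarith)
        intervalIntegrable_const hFint2 hlow
    have h2 : (∫ _t in a..(a + δ), (ε / (3 * δ))^2 : ℝ) = ε^2 / (9 * δ) := by
      rw [intervalIntegral.integral_const, smul_eq_mul]
      field_simp
      ring
    linarith
  -- compare with the full integral
  have hstep2 : (∫ t in a..(a + δ), F t) ≤ ∫ t in (0:ℝ)..(2 * Real.pi), F t := by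
    apply intervalIntegral.integral_mono_interval ha0 (by linarith) haδ
    · filter_upwards with t using hFnonneg t
    · exact hFint
  have hCbound := hC r hrI
  have hintC : (∫ t in (0:ℝ)..(2 * Real.pi), F t) ≤ C := hCbound
  -- final contradiction
  have hbig : 2 * (|C| + 1) ≤ ε^2 / (9 * δ) := by
    rw [le_div_iff₀ (by positivity)]
    have h18 : δ * (18 * (|C| + 1)) ≤ ε^2 := by
      rw [← le_div_iff₀ (by positivity)]
      exact hδC
    nlinarith [abs_nonneg C]
  have : C < ε^2 / (9 * δ) := by
    have h1 := le_abs_self C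
    have h2 := abs_nonneg C
    linarith
  linarith
end
end

section
/- Let b be in the closed unit ball of H^∞(𝔻) and let I be an open arc of 𝕋. If every function f ∈ H(b) has a continuous extension to 𝔻 ∪ I, then b has a continuous extension to 𝔻 ∪ I and |b| = 1 on I; moreover, for every ζ_0 ∈ I, the functional of evaluation at ζ_0 is bounded on H(b) and its kernel function is k_{ζ_0}^b(z) = (1 − conj(b(ζ_0)) b(z))/(1 − conj(ζ_0) z). -/
open Complex MeasureTheory Filter Set Metric Topology

noncomputable section

/-- `H²(𝔻)`, modeled as the Hilbert space of square-summable Taylor-coefficient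
sequences of analytic functions on `𝔻`. -/
abbrev H2 : Type := lp (fun _ : ℕ => ℂ) 2

/-- The analytic function on `𝔻` realized by an `H²` coefficient sequence. -/
def oz (f : H2) (z : ℂ) : ℂ := ∑' n : ℕ, f n * z ^ n

-- For `y` in the range of `R`, the unique preimage of `y` under `R` which is orthogonal
-- to `ker R` (junk value `0` if `y ∉ range R`).
open Classical in
def Qmap {E : Type*} [NormedAddCommGroup E] [InnerProductSpace ℂ E] [CompleteSpace E]
    (R : E →L[ℂ] E) (y : E) : E :=
  if h : ∃ u, R u = y then (((LinearMap.ker (R : E →ₗ[ℂ] E))ᗮ).orthogonalProjectionOnto h.choose : E) else 0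

/-- The de Branges--Rovnyak inner product `⟨x, y⟩_b` (linear in `x`, conjugate-linear
in `y`), determined by `⟨R f, R g⟩_b = ⟨f, g⟩₂` for `f, g ⊥ ker R`, where
`R = (Id - T_b T_{conj b})^{1/2}`. -/
def dbInner {E : Type*} [NormedAddCommGroup E] [InnerProductSpace ℂ E] [CompleteSpace E]
    (R : E →L[ℂ] E) (x y : E) : ℂ := inner ℂ (Qmap R y) (Qmap R x)

/-- The de Branges--Rovnyak norm `‖x‖_b`. -/
def dbNorm {E : Type*} [NormedAddCommGroup E] [InnerProductSpace ℂ E] [CompleteSpace E]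
    (R : E →L[ℂ] E) (x : E) : ℝ := ‖Qmap R x‖

/-- The adjoint `X*` of `X := S*|H(b)`, given by Sarason's formula
`X* h = S h - ⟨h, S* b⟩_b • b`, where `S` is the forward shift on `H²`, `R` is
`(Id - T_b T_{conj b})^{1/2}` and `bv` is `b` viewed as an element of `H²`. -/
def Xstar (R S : H2 →L[ℂ] H2) (bv : H2) (h : H2) : H2 :=
  S h - dbInner R h (ContinuousLinearMap.adjoint S bv) • bv

/-- `∂^N k_z^b / ∂ z̄^N (w)` : the `N`-th derivative, in the conjugate variable `z̄`, of the
reproducing kernel `k_z^b(w) = (1 - conj (b z) * b w) / (1 - conj z * w)` of `H(b)`. -/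
def kD (b : ℂ → ℂ) (N : ℕ) (z w : ℂ) : ℂ :=
  iteratedDeriv N
    (fun u => (1 - (starRingEnd ℂ) (b ((starRingEnd ℂ) u)) * b w) / (1 - u * w))
    ((starRingEnd ℂ) z)

/-- An (nonempty) open arc of the unit circle `𝕋`. -/
def IsOpenArc (I : Set ℂ) : Prop :=
  ∃ α β : ℝ, α < β ∧ I = (fun t : ℝ => Complex.exp (Complex.I * (t : ℂ))) '' Set.Ioo α β

-- kernel sequence
def s16ker (w : ℂ) : ℕ → ℂ := fun n => (starRingEnd ℂ w) ^ n

lemma s16ker_mem {w : ℂ} (hw : ‖w‖ < 1) : Memℓp (s16ker w) 2 := by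
  apply memℓp_gen
  have hfun : (fun n : ℕ => ‖s16ker w n‖ ^ (2 : ENNReal).toReal)
      = fun n : ℕ => (‖w‖ ^ 2) ^ n := by
    funext n
    have h1 : ‖s16ker w n‖ = ‖w‖ ^ n := by
      simp [s16ker, map_pow]
    have h2 : (2 : ENNReal).toReal = ((2 : ℕ) : ℝ) := by norm_num
    rw [h1, h2, Real.rpow_natCast]
    ring
  rw [hfun]
  apply summable_geometric_of_lt_one (by positivity)
  nlinarith [norm_nonneg w]

def s16K {w : ℂ} (hw : ‖w‖ < 1) : H2 := ⟨s16ker w, s16ker_mem hw⟩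

lemma s16K_apply {w : ℂ} (hw : ‖w‖ < 1) (n : ℕ) :
    (s16K hw) n = (starRingEnd ℂ w) ^ n := rfl

lemma s16_norm_apply_le (f : H2) (n : ℕ) : ‖f n‖ ≤ ‖f‖ :=
  lp.norm_apply_le_norm (by norm_num) f n

lemma s16_oz_summable (f : H2) {z : ℂ} (hz : ‖z‖ < 1) :
    Summable (fun n : ℕ => f n * z ^ n) := by
  apply Summable.of_norm
  refine Summable.of_nonneg_of_le (fun n => norm_nonneg _) (fun n => ?_)
    ((summable_geometric_of_lt_one (norm_nonneg z) hz).mul_left ‖f‖)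
  rw [norm_mul, norm_pow]
  exact mul_le_mul_of_nonneg_right (s16_norm_apply_le f n) (by positivity)

lemma s16_oz_eq_inner (f : H2) {w : ℂ} (hw : ‖w‖ < 1) :
    oz f w = inner ℂ (s16K hw) f := by
  rw [lp.inner_eq_tsum]
  unfold oz
  refine tsum_congr fun n => ?_
  rw [RCLike.inner_apply, s16K_apply, map_pow, Complex.conj_conj, mul_comm]

lemma s16_oz_sub (f g : H2) (z : ℂ) (hz : ‖z‖ < 1) :
    oz (f - g) z = oz f z - oz g z := by
  unfold oz
  rw [tsum_congr (fun n => ?_), Summable.tsum_sub (s16_oz_summable f hz) (s16_oz_summable g hz)]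
  rw [lp.coeFn_sub, Pi.sub_apply, sub_mul]

lemma s16_oz_smul (c : ℂ) (f : H2) (z : ℂ) (hz : ‖z‖ < 1) :
    oz (c • f) z = c * oz f z := by
  unfold oz
  rw [tsum_congr (fun n => ?_), tsum_mul_left]
  rw [lp.coeFn_smul, Pi.smul_apply, smul_eq_mul, mul_assoc]

lemma s16_oz_K {w z : ℂ} (hw : ‖w‖ < 1) (hz : ‖z‖ < 1) :
    oz (s16K hw) z = (1 - (starRingEnd ℂ) w * z)⁻¹ := by
  unfold oz
  simp only [s16K_apply]
  rw [tsum_congr (fun n => (mul_pow _ _ n).symm), tsum_geometric_of_norm_lt_one]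
  rw [norm_mul, Complex.norm_conj]
  nlinarith [norm_nonneg w, norm_nonneg z, norm_nonneg w]

lemma s16_mem_disc {w : ℂ} : w ∈ openUnitDisc ↔ ‖w‖ < 1 := by
  simp [openUnitDisc, Complex.dist_eq]

lemma s16_Rsym (R : H2 →L[ℂ] H2) (hR : R.IsPositive) (x y : H2) :
    (inner ℂ (R x) y : ℂ) = inner ℂ x (R y) := by
  conv_lhs => rw [← hR.isSelfAdjoint.adjoint_eq]
  exact ContinuousLinearMap.adjoint_inner_left R y x

lemma s16_adj_K (b : ℂ → ℂ) (Tb : H2 →L[ℂ] H2)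
    (hTb : ∀ f : H2, ∀ z ∈ openUnitDisc, oz (Tb f) z = b z * oz f z)
    {w : ℂ} (hw : ‖w‖ < 1) :
    ContinuousLinearMap.adjoint Tb (s16K hw) = (starRingEnd ℂ) (b w) • s16K hw := by
  apply ext_inner_right ℂ
  intro v
  rw [ContinuousLinearMap.adjoint_inner_left, inner_smul_left, ← s16_oz_eq_inner _ hw,
    ← s16_oz_eq_inner _ hw, hTb v w (s16_mem_disc.2 hw), Complex.conj_conj]

-- `R (R x) = x - Tb ((adjoint Tb) x)`
lemma s16_RR (Tb R : H2 →L[ℂ] H2)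
    (hRsq : R ∘L R = 1 - Tb ∘L ContinuousLinearMap.adjoint Tb) (x : H2) :
    R (R x) = x - Tb (ContinuousLinearMap.adjoint Tb x) := by
  have h := congrArg (fun T : H2 →L[ℂ] H2 => T x) hRsq
  simpa using h

-- Qmap lemmas
lemma s16_Qmap_mem (R : H2 →L[ℂ] H2) (y : H2) : Qmap R y ∈ (LinearMap.ker (R : H2 →ₗ[ℂ] H2))ᗮ := by
  unfold Qmap
  split
  · exact SetLike.coe_mem _
  · exact Submodule.zero_mem _

lemma s16_R_Qmap (R : H2 →L[ℂ] H2) {y : H2} (hy : ∃ u, R u = y) : R (Qmap R y) = y := by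
  haveI : CompleteSpace (LinearMap.ker (R : H2 →ₗ[ℂ] H2)) :=
    (ContinuousLinearMap.isClosed_ker R).completeSpace_coe
  unfold Qmap
  rw [dif_pos hy]
  have h1 : hy.choose - (((LinearMap.ker (R : H2 →ₗ[ℂ] H2))ᗮ).orthogonalProjectionOnto hy.choose : H2)
      ∈ LinearMap.ker (R : H2 →ₗ[ℂ] H2) := by
    have := Submodule.sub_starProjection_mem_orthogonal (K := (LinearMap.ker (R : H2 →ₗ[ℂ] H2))ᗮ) hy.choose
    rwa [Submodule.starProjection_apply, Submodule.orthogonal_orthogonal] at this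
  have h2 : R (hy.choose - (((LinearMap.ker (R : H2 →ₗ[ℂ] H2))ᗮ).orthogonalProjectionOnto hy.choose : H2)) = 0 :=
    h1
  rw [map_sub] at h2
  have h3 := hy.choose_spec
  rw [sub_eq_zero] at h2
  rw [← h2, h3]

lemma s16_Qmap_R (R : H2 →L[ℂ] H2) {κ : H2} (hκ : κ ∈ (LinearMap.ker (R : H2 →ₗ[ℂ] H2))ᗮ) :
    Qmap R (R κ) = κ := by
  haveI : CompleteSpace (LinearMap.ker (R : H2 →ₗ[ℂ] H2)) :=
    (ContinuousLinearMap.isClosed_ker R).completeSpace_coe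
  have hy : ∃ u, R u = R κ := ⟨κ, rfl⟩
  unfold Qmap
  rw [dif_pos hy]
  have hker : hy.choose - κ ∈ LinearMap.ker (R : H2 →ₗ[ℂ] H2) := by
    rw [LinearMap.mem_ker, ContinuousLinearMap.coe_coe, map_sub, hy.choose_spec, sub_self]
  have h3 : ((LinearMap.ker (R : H2 →ₗ[ℂ] H2))ᗮ).orthogonalProjectionOnto hy.choose
      = ((LinearMap.ker (R : H2 →ₗ[ℂ] H2))ᗮ).orthogonalProjectionOnto κ := by
    rw [← sub_eq_zero, ← map_sub]
    exact Submodule.orthogonalProjectionOnto_apply_of_mem_orthogonal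
      (by rwa [Submodule.orthogonal_orthogonal])
  rw [h3]
  exact Submodule.starProjection_eq_self_iff.2 hκ

lemma s16_arc_abs {I : Set ℂ} (hI : IsOpenArc I) {ζ : ℂ} (hζ : ζ ∈ I) : ‖ζ‖ = 1 := by
  obtain ⟨α, β, hab, rfl⟩ := hI
  obtain ⟨t, _, rfl⟩ := hζ
  rw [Complex.norm_exp]
  simp

lemma s16_arc_nonempty {I : Set ℂ} (hI : IsOpenArc I) : ∃ ζ, ζ ∈ I := by
  obtain ⟨α, β, hab, rfl⟩ := hI
  exact ⟨_, ⟨(α + β) / 2, ⟨by linarith, by linarith⟩, rfl⟩⟩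

def s16r (j : ℕ) : ℝ := 1 - 1 / (j + 2)

lemma s16r_nonneg (j : ℕ) : 0 ≤ s16r j := by
  have : 1 / ((j : ℝ) + 2) ≤ 1 := by
    rw [div_le_one (by positivity)]
    linarith
  simp only [s16r]; linarith

lemma s16r_lt_one (j : ℕ) : s16r j < 1 := by
  have : 0 < 1 / ((j : ℝ) + 2) := by positivity
  simp only [s16r]; linarith

lemma s16r_tendsto : Tendsto s16r atTop (𝓝 1) := by
  have h : Tendsto (fun j : ℕ => 1 / ((j : ℝ) + 2)) atTop (𝓝 0) := by
    have h0 : Tendsto (fun j : ℕ => ((j : ℝ) + 2)) atTop atTop :=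
      tendsto_atTop_add_const_right atTop 2 tendsto_natCast_atTop_atTop
    simpa [one_div, Pi.inv_def] using h0.inv_tendsto_atTop
  have h2 := (tendsto_const_nhds (x := (1 : ℝ)) (f := atTop)).sub h
  rw [sub_zero] at h2
  refine h2.congr fun j => ?_
  simp only [s16r]

def s16w (ζ : ℂ) (j : ℕ) : ℂ := (s16r j : ℂ) * ζ

lemma s16w_abs {ζ : ℂ} (hζ : ‖ζ‖ = 1) (j : ℕ) : ‖s16w ζ j‖ < 1 := by
  rw [s16w, norm_mul, hζ, mul_one, Complex.norm_real, Real.norm_eq_abs, _root_.abs_of_nonneg (s16r_nonneg j)]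
  exact s16r_lt_one j

lemma s16w_mem {ζ : ℂ} (hζ : ‖ζ‖ = 1) (j : ℕ) : s16w ζ j ∈ openUnitDisc :=
  s16_mem_disc.2 (s16w_abs hζ j)

lemma s16w_tendsto (ζ : ℂ) : Tendsto (s16w ζ) atTop (𝓝 ζ) := by
  have h1 : Tendsto (fun j : ℕ => ((s16r j : ℝ) : ℂ)) atTop (𝓝 ((1 : ℝ) : ℂ)) :=
    (Complex.continuous_ofReal.tendsto 1).comp s16r_tendsto
  have := h1.mul_const ζ
  simp only [Complex.ofReal_one, one_mul] at this
  exact this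

lemma s16_bval {I : Set ℂ} (hI : IsOpenArc I) {ζ : ℂ} (hζ : ζ ∈ I) (f : H2) (g : ℂ → ℂ)
    (hg : ContinuousOn g (openUnitDisc ∪ I)) (hge : Set.EqOn g (oz f) openUnitDisc) :
    Tendsto (fun j => oz f (s16w ζ j)) atTop (𝓝 (g ζ)) := by
  have habs := s16_arc_abs hI hζ
  have h1 : Tendsto (s16w ζ) atTop (𝓝[openUnitDisc ∪ I] ζ) := by
    rw [tendsto_nhdsWithin_iff]
    exact ⟨s16w_tendsto ζ, Eventually.of_forall fun j => Or.inl (s16w_mem habs j)⟩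
  have h2 := ((hg ζ (Or.inr hζ)).tendsto).comp h1
  refine h2.congr fun j => ?_
  exact hge (s16w_mem habs j)

lemma s16_key (R : H2 →L[ℂ] H2) (hRpos : R.IsPositive)
    (I : Set ℂ) (hI : IsOpenArc I)
    (hcont : ∀ f ∈ Set.range ⇑R, ∃ g : ℂ → ℂ,
      ContinuousOn g (openUnitDisc ∪ I) ∧ Set.EqOn g (oz f) openUnitDisc)
    {ζ0 : ℂ} (hζ0 : ζ0 ∈ I) :
    ∃ κ : H2, κ ∈ (LinearMap.ker (R : H2 →ₗ[ℂ] H2))ᗮ ∧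
      ∀ u : H2, u ∈ (LinearMap.ker (R : H2 →ₗ[ℂ] H2))ᗮ →
        Tendsto (fun j => oz (R u) (s16w ζ0 j)) atTop (𝓝 (inner ℂ κ u : ℂ)) := by
  have habs := s16_arc_abs hI hζ0
  set E : Submodule ℂ H2 := (LinearMap.ker (R : H2 →ₗ[ℂ] H2))ᗮ with hE
  haveI : CompleteSpace E := (Submodule.isClosed_orthogonal _).completeSpace_coe
  -- the family of evaluation functionals at `s16w ζ0 j`
  set φ : ℕ → (E →L[ℂ] ℂ) :=
    fun j => (innerSL ℂ (R (s16K (s16w_abs habs j)))).comp E.subtypeL with hφ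
  have hφval : ∀ (j : ℕ) (u : E), φ j u = oz (R (u : H2)) (s16w ζ0 j) := by
    intro j u
    have : φ j u = (inner ℂ (R (s16K (s16w_abs habs j))) (u : H2) : ℂ) := rfl
    rw [this, s16_Rsym R hRpos, ← s16_oz_eq_inner _ (s16w_abs habs j)]
  -- each `u` gives a bounded sequence
  have htend : ∀ u : E, Tendsto (fun j => φ j u) atTop
      (𝓝 ((hcont (R (u : H2)) ⟨(u : H2), rfl⟩).choose ζ0)) := by
    intro u
    obtain ⟨hg1, hg2⟩ := (hcont (R (u : H2)) ⟨(u : H2), rfl⟩).choose_spec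
    have := s16_bval hI hζ0 (R (u : H2)) _ hg1 hg2
    refine this.congr fun j => ?_
    rw [hφval]
  have hptwise : ∀ u : E, ∃ C : ℝ, ∀ j, ‖φ j u‖ ≤ C := by
    intro u
    obtain ⟨C, hC⟩ := ((htend u).norm).bddAbove_range
    exact ⟨C, fun j => hC ⟨j, rfl⟩⟩
  obtain ⟨C', hC'⟩ := banach_steinhaus hptwise
  -- the limit functional
  set Λ₀ : E → ℂ := fun u => (hcont (R (u : H2)) ⟨(u : H2), rfl⟩).choose ζ0 with hΛ₀
  have hadd : ∀ u v : E, Λ₀ (u + v) = Λ₀ u + Λ₀ v := by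
    intro u v
    refine tendsto_nhds_unique (htend (u + v)) ?_
    have := (htend u).add (htend v)
    refine this.congr fun j => ?_
    rw [← map_add]
  have hsmul : ∀ (c : ℂ) (u : E), Λ₀ (c • u) = c * Λ₀ u := by
    intro c u
    refine tendsto_nhds_unique (htend (c • u)) ?_
    have := (htend u).const_mul c
    refine this.congr fun j => ?_
    rw [(φ j).map_smul, smul_eq_mul]
  have hbound : ∀ u : E, ‖Λ₀ u‖ ≤ C' * ‖u‖ := by
    intro u
    refine le_of_tendsto (htend u).norm (Eventually.of_forall fun j => ?_)
    calc ‖φ j u‖ ≤ ‖φ j‖ * ‖u‖ := (φ j).le_opNorm u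
    _ ≤ C' * ‖u‖ := mul_le_mul_of_nonneg_right (hC' j) (norm_nonneg u)
  set Λ : E →L[ℂ] ℂ :=
    LinearMap.mkContinuous
      { toFun := Λ₀, map_add' := hadd, map_smul' := hsmul } C' hbound with hΛ
  set κh : E := (InnerProductSpace.toDual ℂ E).symm Λ with hκh
  refine ⟨(κh : H2), κh.2, fun u hu => ?_⟩
  have h1 : (inner ℂ ((κh : H2)) u : ℂ) = Λ ⟨u, hu⟩ := by
    have := InnerProductSpace.toDual_symm_apply (𝕜 := ℂ) (E := E) (x := ⟨u, hu⟩) (y := Λ)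
    rw [← hκh] at this
    rw [← this, Submodule.coe_inner]
  rw [h1]
  have := htend ⟨u, hu⟩
  refine this.congr fun j => (hφval j ⟨u, hu⟩) 

lemma s16_one_sub_ne {a : ℂ} (h : ‖a‖ < 1) : (1 : ℂ) - a ≠ 0 := by
  intro h0
  rw [sub_eq_zero] at h0
  rw [← h0] at h
  simp at h

lemma s16_oz_RRK (b : ℂ → ℂ) (Tb : H2 →L[ℂ] H2)
    (hTb : ∀ f : H2, ∀ z ∈ openUnitDisc, oz (Tb f) z = b z * oz f z)
    (R : H2 →L[ℂ] H2)
    (hRsq : R ∘L R = 1 - Tb ∘L ContinuousLinearMap.adjoint Tb)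
    {w z : ℂ} (hw : ‖w‖ < 1) (hz : ‖z‖ < 1) :
    oz (R (R (s16K hw))) z
      = (1 - (starRingEnd ℂ) (b w) * b z) * (1 - (starRingEnd ℂ) w * z)⁻¹ := by
  rw [s16_RR Tb R hRsq, s16_adj_K b Tb hTb hw, Tb.map_smul]
  rw [s16_oz_sub _ _ z hz, s16_oz_smul _ _ _ hz, hTb _ z (s16_mem_disc.2 hz), s16_oz_K hw hz]
  ring

lemma s16_tendsto_within {I : Set ℂ} (hI : IsOpenArc I) {ζ : ℂ} (hζ : ζ ∈ I) :
    Tendsto (s16w ζ) atTop (𝓝[openUnitDisc ∪ I] ζ) := by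
  rw [tendsto_nhdsWithin_iff]
  exact ⟨s16w_tendsto ζ, Eventually.of_forall fun j => Or.inl (s16w_mem (s16_arc_abs hI hζ) j)⟩

lemma s16_nontrivial (b : ℂ → ℂ) (Tb : H2 →L[ℂ] H2)
    (hTb : ∀ f : H2, ∀ z ∈ openUnitDisc, oz (Tb f) z = b z * oz f z)
    (R : H2 →L[ℂ] H2)
    (hRsq : R ∘L R = 1 - Tb ∘L ContinuousLinearMap.adjoint Tb)
    (I : Set ℂ) (hI : IsOpenArc I)
    (hcont : ∀ f ∈ Set.range ⇑R, ∃ g : ℂ → ℂ,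
      ContinuousOn g (openUnitDisc ∪ I) ∧ Set.EqOn g (oz f) openUnitDisc) :
    ∃ w ∈ openUnitDisc, b w ≠ 0 := by
  by_contra hb0
  push_neg at hb0
  obtain ⟨ζ1, hζ1⟩ := s16_arc_nonempty hI
  have habs1 := s16_arc_abs hI hζ1
  have hmem : Memℓp (fun n : ℕ => ((1 / ((n : ℝ) + 1) : ℝ) : ℂ) * (starRingEnd ℂ ζ1) ^ n) 2 := by
    apply memℓp_gen
    have hfun : (fun n : ℕ => ‖((1 / ((n : ℝ) + 1) : ℝ) : ℂ) * (starRingEnd ℂ ζ1) ^ n‖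
        ^ (2 : ENNReal).toReal) = fun n : ℕ => 1 / ((n : ℝ) + 1) ^ 2 := by
      funext n
      have h1 : ‖((1 / ((n : ℝ) + 1) : ℝ) : ℂ) * (starRingEnd ℂ ζ1) ^ n‖
          = 1 / ((n : ℝ) + 1) := by
        rw [norm_mul, norm_pow, Complex.norm_real, Real.norm_eq_abs,
          Complex.norm_conj, habs1, one_pow, mul_one, _root_.abs_of_nonneg (by positivity)]
      have h2 : (2 : ENNReal).toReal = ((2 : ℕ) : ℝ) := by norm_num
      rw [h1, h2, Real.rpow_natCast, div_pow, one_pow]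
    rw [hfun]
    have := (summable_nat_add_iff (f := fun n : ℕ => 1 / ((n : ℝ)) ^ 2) 1).2
      (Real.summable_one_div_nat_pow.2 (by norm_num))
    refine this.congr fun n => ?_
    push_cast
    ring
  set fb : H2 := ⟨_, hmem⟩ with hfb
  obtain ⟨g, hgc, hge⟩ := hcont (R (R fb)) ⟨R fb, rfl⟩
  have htd := s16_bval hI hζ1 (R (R fb)) g hgc hge
  have hζζ : (starRingEnd ℂ) ζ1 * ζ1 = 1 := by
    rw [mul_comm, Complex.mul_conj, Complex.normSq_eq_norm_sq, habs1]
    norm_num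
  have hval : ∀ j, oz (R (R fb)) (s16w ζ1 j)
      = ((∑' n : ℕ, (1 / ((n : ℝ) + 1)) * (s16r j) ^ n : ℝ) : ℂ) := by
    intro j
    have hzj : ‖s16w ζ1 j‖ < 1 := s16w_abs habs1 j
    have hmemd := s16_mem_disc.2 hzj
    rw [s16_RR Tb R hRsq, s16_oz_sub _ _ _ hzj, hTb _ _ hmemd, hb0 _ hmemd, zero_mul, sub_zero]
    rw [Complex.ofReal_tsum]
    unfold oz
    refine tsum_congr fun n => ?_
    have hcoe : fb n = ((1 / ((n : ℝ) + 1) : ℝ) : ℂ) * (starRingEnd ℂ ζ1) ^ n := rfl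
    rw [hcoe, s16w, mul_pow, Complex.ofReal_mul, Complex.ofReal_pow]
    calc ((1 / ((n : ℝ) + 1) : ℝ) : ℂ) * (starRingEnd ℂ ζ1) ^ n
          * (((s16r j : ℝ) : ℂ) ^ n * ζ1 ^ n)
        = ((1 / ((n : ℝ) + 1) : ℝ) : ℂ) * ((s16r j : ℝ) : ℂ) ^ n
          * ((starRingEnd ℂ ζ1) * ζ1) ^ n := by ring
      _ = ((1 / ((n : ℝ) + 1) : ℝ) : ℂ) * ((s16r j : ℝ) : ℂ) ^ n := by rw [hζζ, one_pow, mul_one]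
  have hre : Tendsto (fun j => ∑' n : ℕ, (1 / ((n : ℝ) + 1)) * (s16r j) ^ n) atTop
      (𝓝 (g ζ1).re) := by
    have := (Complex.continuous_re.tendsto (g ζ1)).comp htd
    refine this.congr fun j => ?_
    rw [Function.comp_apply, hval j, Complex.ofReal_re]
  have hsum : ∀ j, Summable (fun n : ℕ => (1 / ((n : ℝ) + 1)) * (s16r j) ^ n) := by
    intro j
    refine Summable.of_nonneg_of_le (fun n => mul_nonneg (by positivity) (pow_nonneg (s16r_nonneg j) n)) (fun n => ?_)
      (summable_geometric_of_lt_one (s16r_nonneg j) (s16r_lt_one j))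
    have h1 : (1 / ((n : ℝ) + 1)) ≤ 1 := by
      rw [div_le_one (by positivity)]; linarith [Nat.cast_nonneg (α := ℝ) n]
    nlinarith [pow_nonneg (s16r_nonneg j) n]
  have hN : ∀ N : ℕ, ∑ n ∈ Finset.range N, 1 / ((n : ℝ) + 1) ≤ (g ζ1).re := by
    intro N
    have hfin : Tendsto (fun j => ∑ n ∈ Finset.range N, (1 / ((n : ℝ) + 1)) * (s16r j) ^ n)
        atTop (𝓝 (∑ n ∈ Finset.range N, 1 / ((n : ℝ) + 1))) := by
      have : Tendsto (fun j => ∑ n ∈ Finset.range N, (1 / ((n : ℝ) + 1)) * (s16r j) ^ n)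
          atTop (𝓝 (∑ n ∈ Finset.range N, (1 / ((n : ℝ) + 1)) * (1 : ℝ) ^ n)) := by
        apply tendsto_finset_sum
        intro n _
        exact (s16r_tendsto.pow n).const_mul _
      simpa using this
    refine le_of_tendsto_of_tendsto' hfin hre fun j => ?_
    exact Summable.sum_le_tsum (Finset.range N) (fun n _ => mul_nonneg (by positivity) (pow_nonneg (s16r_nonneg j) n)) (hsum j)
  obtain ⟨N, hN2⟩ := (tendsto_atTop.1 Real.tendsto_sum_range_one_div_nat_succ_atTop
    ((g ζ1).re + 1)).exists
  have := hN N
  linarith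

theorem statement_16
    (b : ℂ → ℂ)
    (hb_diff : DifferentiableOn ℂ b openUnitDisc)
    (hb_bound : ∀ z ∈ openUnitDisc, ‖b z‖ ≤ 1)
    -- `Tb` is the Toeplitz operator `T_b` on `H²` (for the analytic symbol `b` it is
    -- multiplication by `b`), and `R = (Id - T_b T_{conj b})^{1/2}` is the positive square
    -- root of `Id - T_b T_b*`, so that `H(b) = R(H²) = Set.range R`:
    (Tb : H2 →L[ℂ] H2)
    (hTb : ∀ f : H2, ∀ z ∈ openUnitDisc, oz (Tb f) z = b z * oz f z)
    (R : H2 →L[ℂ] H2) (hRpos : R.IsPositive)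
    (hRsq : R ∘L R = 1 - Tb ∘L ContinuousLinearMap.adjoint Tb)
    (I : Set ℂ) (hI : IsOpenArc I)
    (hcont : ∀ f ∈ Set.range ⇑R, ∃ g : ℂ → ℂ,
      ContinuousOn g (openUnitDisc ∪ I) ∧ Set.EqOn g (oz f) openUnitDisc) :
    ∃ gb : ℂ → ℂ, ContinuousOn gb (openUnitDisc ∪ I) ∧ Set.EqOn gb b openUnitDisc ∧
      (∀ z ∈ I, ‖gb z‖ = 1) ∧
      ∀ ζ0 ∈ I, ∃ k ∈ Set.range ⇑R,
        -- `k` is the kernel function `k_{ζ0}^b(z) = (1 - conj (b ζ0) * b z)/(1 - conj ζ0 * z)`: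
        (∀ w ∈ openUnitDisc,
          oz k w = (1 - (starRingEnd ℂ) (gb ζ0) * b w) / (1 - (starRingEnd ℂ) ζ0 * w)) ∧
        -- the evaluation functional at `ζ0` is bounded on `H(b)`, induced by `k`:
        ∃ C : ℝ, ∀ f ∈ Set.range ⇑R, ∀ gf : ℂ → ℂ,
          ContinuousOn gf (openUnitDisc ∪ I) → Set.EqOn gf (oz f) openUnitDisc →
          ‖gf ζ0‖ ≤ C * dbNorm R f ∧ gf ζ0 = dbInner R f k := by
  classical
  -- `b` is not identically zero on the disc
  obtain ⟨w0, hw0d, hbw0⟩ := s16_nontrivial b Tb hTb R hRsq I hI hcont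
  have hw0 : ‖w0‖ < 1 := s16_mem_disc.1 hw0d
  -- the continuous extension of `b`
  obtain ⟨g0, hg0c, hg0e⟩ := hcont (R (R (s16K hw0))) ⟨R (s16K hw0), rfl⟩
  have hcb : (starRingEnd ℂ) (b w0) ≠ 0 := by
    intro h
    apply hbw0
    simpa using congrArg (starRingEnd ℂ) h
  set gb : ℂ → ℂ :=
    fun z => (1 - g0 z * (1 - (starRingEnd ℂ) w0 * z)) / (starRingEnd ℂ) (b w0) with hgb
  have hgbc : ContinuousOn gb (openUnitDisc ∪ I) := by
    apply ContinuousOn.div_const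
    exact continuousOn_const.sub (hg0c.mul (Continuous.continuousOn (by continuity)))
  have hgbe : Set.EqOn gb b openUnitDisc := by
    intro z hz
    have hz1 : ‖z‖ < 1 := s16_mem_disc.1 hz
    have hne : (1 : ℂ) - (starRingEnd ℂ) w0 * z ≠ 0 := by
      apply s16_one_sub_ne
      rw [norm_mul, Complex.norm_conj]
      nlinarith [norm_nonneg w0, norm_nonneg z]
    have hval : g0 z = (1 - (starRingEnd ℂ) (b w0) * b z) * (1 - (starRingEnd ℂ) w0 * z)⁻¹ := by
      rw [hg0e hz, s16_oz_RRK b Tb hTb R hRsq hw0 hz1]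
    simp only [hgb]
    rw [hval]
    field_simp
    ring
  -- the main per-point construction
  have main : ∀ ζ0 ∈ I, ‖gb ζ0‖ = 1 ∧ ∃ k ∈ Set.range ⇑R,
      (∀ w ∈ openUnitDisc,
        oz k w = (1 - (starRingEnd ℂ) (gb ζ0) * b w) / (1 - (starRingEnd ℂ) ζ0 * w)) ∧
      ∃ C : ℝ, ∀ f ∈ Set.range ⇑R, ∀ gf : ℂ → ℂ,
        ContinuousOn gf (openUnitDisc ∪ I) → Set.EqOn gf (oz f) openUnitDisc →
        ‖gf ζ0‖ ≤ C * dbNorm R f ∧ gf ζ0 = dbInner R f k := by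
    intro ζ0 hζ0
    have habs := s16_arc_abs hI hζ0
    have hζζ0 : (starRingEnd ℂ) ζ0 * ζ0 = 1 := by
      rw [mul_comm, Complex.mul_conj, Complex.normSq_eq_norm_sq, habs]
      norm_num
    obtain ⟨κ, hκE, hκ⟩ := s16_key R hRpos I hI hcont hζ0
    haveI : CompleteSpace (LinearMap.ker (R : H2 →ₗ[ℂ] H2)) :=
      (ContinuousLinearMap.isClosed_ker R).completeSpace_coe
    -- boundary limit of b along the radius
    have hb : Tendsto (fun j => b (s16w ζ0 j)) atTop (𝓝 (gb ζ0)) := by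
      have := (hgbc ζ0 (Or.inr hζ0)).tendsto.comp (s16_tendsto_within hI hζ0)
      exact this.congr fun j => hgbe (s16w_mem habs j)
    -- the kernel formula
    have hform : ∀ w : ℂ, ‖w‖ < 1 →
        oz (R κ) w = (1 - (starRingEnd ℂ) (gb ζ0) * b w)
          / (1 - (starRingEnd ℂ) ζ0 * w) := by
      intro w hw
      set v : H2 := R (s16K hw) with hv
      set v₁ : H2 := (((LinearMap.ker (R : H2 →ₗ[ℂ] H2))ᗮ).orthogonalProjectionOnto v : H2) with hv₁
      have hv₁mem : v₁ ∈ (LinearMap.ker (R : H2 →ₗ[ℂ] H2))ᗮ := SetLike.coe_mem _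
      have hker : v - v₁ ∈ LinearMap.ker (R : H2 →ₗ[ℂ] H2) := by
        have := Submodule.sub_starProjection_mem_orthogonal (K := (LinearMap.ker (R : H2 →ₗ[ℂ] H2))ᗮ) v
        rwa [Submodule.starProjection_apply, Submodule.orthogonal_orthogonal] at this
      have hR1 : R v₁ = R v := by
        have h : R (v - v₁) = 0 := hker
        rw [map_sub, sub_eq_zero] at h
        exact h.symm
      have h1 : oz (R κ) w = (inner ℂ v₁ κ : ℂ) := by
        rw [s16_oz_eq_inner _ hw, ← s16_Rsym R hRpos]
        have h0 : (inner ℂ (v - v₁) κ : ℂ) = 0 :=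
          (Submodule.mem_orthogonal _ κ).1 hκE _ hker
        rw [inner_sub_left] at h0
        exact sub_eq_zero.1 h0
      have h2 : Tendsto (fun j => oz (R v₁) (s16w ζ0 j)) atTop (𝓝 (inner ℂ κ v₁ : ℂ)) :=
        hκ v₁ hv₁mem
      have h3 : Tendsto (fun j => oz (R v₁) (s16w ζ0 j)) atTop
          (𝓝 ((1 - (starRingEnd ℂ) (b w) * gb ζ0) * (1 - (starRingEnd ℂ) w * ζ0)⁻¹)) := by
        have hd : Tendsto (fun j => ((1 : ℂ) - (starRingEnd ℂ) w * s16w ζ0 j)⁻¹) atTop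
            (𝓝 ((1 - (starRingEnd ℂ) w * ζ0)⁻¹)) := by
          apply Tendsto.inv₀
          · exact tendsto_const_nhds.sub (tendsto_const_nhds.mul (s16w_tendsto ζ0))
          · apply s16_one_sub_ne
            rw [norm_mul, Complex.norm_conj, habs, mul_one]
            exact hw
        have hnum : Tendsto (fun j => (1 : ℂ) - (starRingEnd ℂ) (b w) * b (s16w ζ0 j)) atTop
            (𝓝 (1 - (starRingEnd ℂ) (b w) * gb ζ0)) :=
          tendsto_const_nhds.sub (hb.const_mul _)
        refine (hnum.mul hd).congr fun j => ?_
        rw [hR1, hv, s16_oz_RRK b Tb hTb R hRsq hw (s16w_abs habs j)]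
      have h4 := tendsto_nhds_unique h2 h3
      rw [h1, ← inner_conj_symm, h4]
      simp only [map_mul, map_sub, map_one, map_inv₀, Complex.conj_conj]
      rw [div_eq_mul_inv]
      ring
    -- modulus one on the arc
    have habs1 : ‖gb ζ0‖ = 1 := by
      obtain ⟨gk, hgkc, hgke⟩ := hcont (R κ) ⟨κ, rfl⟩
      have htk := s16_bval hI hζ0 (R κ) gk hgkc hgke
      have hdenne : ∀ j, (1 : ℂ) - (starRingEnd ℂ) ζ0 * s16w ζ0 j ≠ 0 := by
        intro j
        have : (starRingEnd ℂ) ζ0 * s16w ζ0 j = ((s16r j : ℝ) : ℂ) := by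
          rw [s16w, show (starRingEnd ℂ) ζ0 * (((s16r j : ℝ) : ℂ) * ζ0)
            = ((s16r j : ℝ) : ℂ) * ((starRingEnd ℂ) ζ0 * ζ0) by ring, hζζ0, mul_one]
        rw [this]
        intro h
        rw [sub_eq_zero] at h
        have := s16r_lt_one j
        have h2 : (s16r j : ℝ) = 1 := by exact_mod_cast h.symm
        linarith
      have hz0 : (1 : ℂ) - (starRingEnd ℂ) ζ0 * ζ0 = 0 := by rw [hζζ0]; ring
      have hA1 : Tendsto (fun j => oz (R κ) (s16w ζ0 j)
          * (1 - (starRingEnd ℂ) ζ0 * s16w ζ0 j)) atTop (𝓝 0) := by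
        have hden : Tendsto (fun j => (1 : ℂ) - (starRingEnd ℂ) ζ0 * s16w ζ0 j) atTop
            (𝓝 ((1 : ℂ) - (starRingEnd ℂ) ζ0 * ζ0)) :=
          tendsto_const_nhds.sub (tendsto_const_nhds.mul (s16w_tendsto ζ0))
        have h := htk.mul hden
        rwa [hz0, mul_zero] at h
      have hA2 : Tendsto (fun j => oz (R κ) (s16w ζ0 j)
          * (1 - (starRingEnd ℂ) ζ0 * s16w ζ0 j)) atTop
          (𝓝 (1 - (starRingEnd ℂ) (gb ζ0) * gb ζ0)) := by
        have hval : ∀ j, oz (R κ) (s16w ζ0 j) * (1 - (starRingEnd ℂ) ζ0 * s16w ζ0 j)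
            = 1 - (starRingEnd ℂ) (gb ζ0) * b (s16w ζ0 j) := by
          intro j
          rw [hform _ (s16w_abs habs j), div_mul_cancel₀ _ (hdenne j)]
        refine (tendsto_const_nhds.sub (hb.const_mul _)).congr fun j => (hval j).symm
      have h5 := tendsto_nhds_unique hA2 hA1
      rw [sub_eq_zero] at h5
      have h6 : ((Complex.normSq (gb ζ0) : ℝ) : ℂ) = 1 := by
        rw [← Complex.mul_conj, mul_comm]
        exact h5.symm
      have h7 : Complex.normSq (gb ζ0) = 1 := by exact_mod_cast h6
      rw [Complex.norm_def, h7, Real.sqrt_one]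
    refine ⟨habs1, R κ, ⟨κ, rfl⟩, fun w hw => hform w (s16_mem_disc.1 hw), ‖κ‖, ?_⟩
    intro f hf gf hgfc hgfe
    have hu : R (Qmap R f) = f := s16_R_Qmap R (by obtain ⟨u, hu⟩ := hf; exact ⟨u, hu⟩)
    have humem := s16_Qmap_mem R f
    have ht1 := s16_bval hI hζ0 f gf hgfc hgfe
    have ht2 := hκ (Qmap R f) humem
    rw [hu] at ht2
    have heq : gf ζ0 = (inner ℂ κ (Qmap R f) : ℂ) := tendsto_nhds_unique ht1 ht2
    have hdb : dbInner R f (R κ) = (inner ℂ κ (Qmap R f) : ℂ) := by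
      unfold dbInner
      rw [s16_Qmap_R R hκE]
    constructor
    · rw [heq]
      calc ‖(inner ℂ κ (Qmap R f) : ℂ)‖ ≤ ‖κ‖ * ‖Qmap R f‖ := norm_inner_le_norm κ _
      _ = ‖κ‖ * dbNorm R f := rfl
    · rw [heq, hdb]
  exact ⟨gb, hgbc, hgbe, fun z hz => (main z hz).1, fun ζ0 hζ0 => (main ζ0 hζ0).2⟩
end
end
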